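/- The map sending a function f : A → ℤ/pℤ to the element (α_f, 1), where α_f(g, a) = f(a) for all g ∈ G and a ∈ A, is a group isomorphism from the additive group of all functions A → ℤ/pℤ onto the center of H. In particular the center of H is elementary abelian of order p^{|A|}. -/

import Mathlib

open Multiplicative

/-- The shift action of `g : G` on functions `(G × A) → R`:
`(g · α)(h, a) = α (g⁻¹h, a)`. -/
def cayAct {G A : Type*} (R : Type*) [Group G] [AddCommGroup R] (g : G) :
    ((G × A) → R) ≃+ ((G × A) → R) where
  toFun α := fun x => α (g⁻¹ * x.1, x.2)
  invFun α := fun x => α (g * x.1, x.2)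
  left_inv := by intro α; funext x; simp
  right_inv := by intro α; funext x; simp
  map_add' := by intro α β; rfl

/-- The action of `G` on the (multiplicatively written) additive group `M` of
functions `(G × A) → R`, as a homomorphism into the automorphism group; it is
used to form the semidirect product `M ⋊ G`. -/
def cayHom (G A R : Type*) [Group G] [AddCommGroup R] :
    G →* MulAut (Multiplicative ((G × A) → R)) where
  toFun g := AddEquiv.toMultiplicative (cayAct R g)
  map_one' := by
    apply MulEquiv.ext
    intro α
    apply Multiplicative.toAdd.injective
    funext x
    simp [cayAct, AddEquiv.toMultiplicative]
  map_mul' := by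
    intro g h
    apply MulEquiv.ext
    intro α
    apply Multiplicative.toAdd.injective
    funext x
    simp [cayAct, AddEquiv.toMultiplicative, mul_assoc]

/-- The generator `(δ_{(1,a)}, φ a)` of `M ⋊ G`. -/
def cayGen {G A : Type*} (R : Type*) [Group G] [AddCommGroup R] [One R]
    [DecidableEq G] [DecidableEq A] (φ : A → G) (a : A) :
    Multiplicative ((G × A) → R) ⋊[cayHom G A R] G :=
  ⟨ofAdd (fun x => if x = ((1 : G), a) then (1 : R) else 0), φ a⟩

/-- The model `H` of the universal Gaschütz `p`-extension `G^{ℤ/p}`: the subgroup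
of `M ⋊ G` generated by the elements `(δ_{(1,a)}, φ a)` for `a ∈ A`. -/
def gaschutzH (G A : Type*) [Group G] [DecidableEq G] [DecidableEq A]
    (p : ℕ) (φ : A → G) :
    Subgroup (Multiplicative ((G × A) → ZMod p) ⋊[cayHom G A (ZMod p)] G) :=
  Subgroup.closure (Set.range (cayGen (ZMod p) φ))

namespace GzAux
set_option linter.unusedSectionVars false

variable {G A : Type*} [Group G] [DecidableEq G] [DecidableEq A] {p : ℕ} {φ : A → G}

lemma cayHom_apply (g : G) (m : Multiplicative ((G × A) → ZMod p)) (x : G × A) :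
    toAdd (cayHom G A (ZMod p) g m) x = toAdd m (g⁻¹ * x.1, x.2) := rfl

lemma gen_mem (a : A) : cayGen (ZMod p) φ a ∈ gaschutzH G A p φ :=
  Subgroup.subset_closure (Set.mem_range_self a)

lemma rightHom_gen (a : A) : SemidirectProduct.rightHom (cayGen (ZMod p) φ a) = φ a := rfl

/-- surjectivity of the projection onto `G`, given that `φ` generates. -/
lemma exists_mem (hgen : Subgroup.closure (Set.range φ) = ⊤) (x : G) :
    ∃ β, (⟨β, x⟩ : Multiplicative ((G × A) → ZMod p) ⋊[cayHom G A (ZMod p)] G)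
      ∈ gaschutzH G A p φ := by
  have hmap : (gaschutzH G A p φ).map SemidirectProduct.rightHom = ⊤ := by
    rw [gaschutzH, MonoidHom.map_closure]
    rw [← hgen]
    congr 1
    ext y
    constructor
    · rintro ⟨_, ⟨a, rfl⟩, rfl⟩; exact ⟨a, rfl⟩
    · rintro ⟨a, rfl⟩; exact ⟨cayGen (ZMod p) φ a, ⟨a, rfl⟩, rfl⟩
  have : x ∈ (gaschutzH G A p φ).map SemidirectProduct.rightHom := by
    rw [hmap]; trivial
  obtain ⟨w, hw, hwx⟩ := this
  refine ⟨w.left, ?_⟩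
  have : w = ⟨w.left, x⟩ := by
    ext
    · rfl
    · exact hwx
  rwa [← this]

lemma conj_inl (β : Multiplicative ((G × A) → ZMod p)) (x : G)
    (m : Multiplicative ((G × A) → ZMod p)) :
    (⟨β, x⟩ : Multiplicative ((G × A) → ZMod p) ⋊[cayHom G A (ZMod p)] G) *
      SemidirectProduct.inl m * (⟨β, x⟩ : _ ⋊[cayHom G A (ZMod p)] G)⁻¹ =
      SemidirectProduct.inl (cayHom G A (ZMod p) x m) := by
  ext
  · simp [mul_comm, mul_assoc, mul_left_comm]
  · simp

lemma shift_mem (hgen : Subgroup.closure (Set.range φ) = ⊤) (x : G)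
    (m : Multiplicative ((G × A) → ZMod p))
    (hm : SemidirectProduct.inl m ∈ gaschutzH G A p φ) :
    SemidirectProduct.inl (cayHom G A (ZMod p) x m) ∈ gaschutzH G A p φ := by
  obtain ⟨β, hβ⟩ := exists_mem hgen x
  rw [← conj_inl β x m]
  exact Subgroup.mul_mem _ (Subgroup.mul_mem _ hβ hm) (Subgroup.inv_mem _ hβ)

lemma gen_pow (a : A) (n : ℕ) :
    (cayGen (ZMod p) φ a) ^ n =
      ⟨ofAdd (fun x => ∑ i ∈ Finset.range n,
          if x.1 = (φ a) ^ i ∧ x.2 = a then (1 : ZMod p) else 0), (φ a) ^ n⟩ := by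
  induction n with
  | zero =>
    rw [pow_zero]
    apply SemidirectProduct.ext
    · show (1:Multiplicative ((G × A) → ZMod p)) = ofAdd _
      apply toAdd.injective
      funext x
      simp
    · show (1:G) = (φ a) ^ 0
      rw [pow_zero]
  | succ n ih =>
    rw [pow_succ, ih]
    apply SemidirectProduct.ext
    · show _ = ofAdd _
      rw [SemidirectProduct.mul_left]
      apply toAdd.injective
      funext x
      rw [toAdd_mul, Pi.add_apply]
      show _ + toAdd (cayHom G A (ZMod p) ((φ a)^n) _) x = _
      rw [cayHom_apply]
      simp only [toAdd_ofAdd, Finset.sum_range_succ]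
      congr 1
      show (if (((φ a)^n)⁻¹ * x.1, x.2) = ((1:G), a) then (1:ZMod p) else 0) = _
      congr 1
      simp [Prod.ext_iff, inv_mul_eq_one, eq_comm]
    · rw [SemidirectProduct.mul_right]
      exact (pow_succ _ _).symm

lemma sum_indicator_pows [Finite G] (t z : G) :
    (∑ i ∈ Finset.range (orderOf t), if z = t ^ i then (1 : ZMod p) else 0)
      = if z ∈ Subgroup.zpowers t then 1 else 0 := by
  by_cases h : z ∈ Subgroup.zpowers t
  · obtain ⟨n, hn⟩ : ∃ n : ℕ, t ^ n = z := by
      have := (isOfFinOrder_of_finite t).mem_powers_iff_mem_zpowers.2 h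
      obtain ⟨n, hn⟩ := this
      exact ⟨n, hn⟩
    have hd : 0 < orderOf t := (isOfFinOrder_of_finite t).orderOf_pos
    have key : t ^ (n % orderOf t) = z := by rw [pow_mod_orderOf, hn]
    rw [if_pos h, Finset.sum_eq_single (n % orderOf t)]
    · rw [key, if_pos rfl]
    · intro i hi hne
      rw [if_neg]
      intro hz
      exact hne (pow_injOn_Iio_orderOf (Finset.mem_range.1 hi) (Nat.mod_lt _ hd)
        (by show t ^ i = t ^ (n % orderOf t); rw [key, ← hz]))
    · intro hmem
      exact absurd (Finset.mem_range.2 (Nat.mod_lt _ hd)) hmem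
  · rw [if_neg h, Finset.sum_eq_zero]
    intro i _
    rw [if_neg]
    intro hz
    exact h ⟨(i : ℤ), by show t ^ (i:ℤ) = z; rw [zpow_natCast, hz]⟩

/-- the indicator of `zpowers (φ a) × {a}`, as an element of `H`. -/
lemma m_mem [Finite G] (a : A) :
    SemidirectProduct.inl (φ := cayHom G A (ZMod p))
      (ofAdd fun x : G × A => if x.1 ∈ Subgroup.zpowers (φ a) ∧ x.2 = a then (1 : ZMod p) else 0)
      ∈ gaschutzH G A p φ := by
  have h := Subgroup.pow_mem _ (gen_mem (p := p) (φ := φ) a) (orderOf (φ a))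
  rw [gen_pow] at h
  have heq : (⟨ofAdd (fun x => ∑ i ∈ Finset.range (orderOf (φ a)),
      if x.1 = (φ a) ^ i ∧ x.2 = a then (1 : ZMod p) else 0), (φ a) ^ orderOf (φ a)⟩ :
      Multiplicative ((G × A) → ZMod p) ⋊[cayHom G A (ZMod p)] G) =
      SemidirectProduct.inl (ofAdd fun x : G × A =>
        if x.1 ∈ Subgroup.zpowers (φ a) ∧ x.2 = a then (1 : ZMod p) else 0) := by
    apply SemidirectProduct.ext
    · show ofAdd _ = ofAdd _
      apply toAdd.injective
      funext x
      simp only [toAdd_ofAdd]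
      by_cases hx : x.2 = a
      · simp only [hx, and_true]
        exact sum_indicator_pows (φ a) x.1
      · simp [hx]
    · show (φ a) ^ orderOf (φ a) = 1
      exact pow_orderOf_eq_one (φ a)
  rwa [heq] at h

lemma inl_prod_mem {ι : Type*} (s : Finset ι) (F : ι → Multiplicative ((G × A) → ZMod p))
    (h : ∀ q ∈ s, SemidirectProduct.inl (φ := cayHom G A (ZMod p)) (F q) ∈ gaschutzH G A p φ) :
    SemidirectProduct.inl (φ := cayHom G A (ZMod p)) (∏ q ∈ s, F q) ∈ gaschutzH G A p φ := by
  classical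
  induction s using Finset.induction_on with
  | empty => rw [Finset.prod_empty, map_one]; exact Subgroup.one_mem _
  | insert _ _ hq ih =>
    rw [Finset.prod_insert hq, map_mul]
    exact Subgroup.mul_mem _ (h _ (Finset.mem_insert_self _ _))
      (ih fun q hqs => h q (Finset.mem_insert_of_mem hqs))

/-- The constant-in-`G` column indicator is in `H`. -/
lemma u_mem [Finite G] (hgen : Subgroup.closure (Set.range φ) = ⊤) (a : A) :
    SemidirectProduct.inl (φ := cayHom G A (ZMod p))
      (ofAdd fun x : G × A => if x.2 = a then (1 : ZMod p) else 0)
      ∈ gaschutzH G A p φ := by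
  classical
  set C := Subgroup.zpowers (φ a) with hC
  letI : Fintype (G ⧸ C) := Fintype.ofFinite _
  set m : Multiplicative ((G × A) → ZMod p) :=
    ofAdd (fun x : G × A => if x.1 ∈ C ∧ x.2 = a then (1 : ZMod p) else 0) with hm
  have hprod : SemidirectProduct.inl (φ := cayHom G A (ZMod p))
      (∏ q : G ⧸ C, cayHom G A (ZMod p) q.out m) ∈ gaschutzH G A p φ :=
    inl_prod_mem Finset.univ _ (fun q _ => shift_mem hgen q.out m (m_mem a))
  have heq : (∏ q : G ⧸ C, cayHom G A (ZMod p) q.out m)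
      = ofAdd (fun x : G × A => if x.2 = a then (1 : ZMod p) else 0) := by
    apply toAdd.injective
    funext x
    rw [toAdd_prod]
    rw [Finset.sum_apply]
    have hterm : ∀ q : G ⧸ C, toAdd (cayHom G A (ZMod p) q.out m) x
        = if q.out⁻¹ * x.1 ∈ C ∧ x.2 = a then (1 : ZMod p) else 0 := fun q => rfl
    simp only [hterm, toAdd_ofAdd]
    by_cases hx : x.2 = a
    · have hcond : ∀ q : G ⧸ C, (q.out⁻¹ * x.1 ∈ C ∧ x.2 = a) ↔ q = QuotientGroup.mk x.1 := by
        intro q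
        rw [and_iff_left hx]
        constructor
        · intro hq
          rw [← QuotientGroup.out_eq' q]
          exact QuotientGroup.eq.2 hq
        · intro hq
          exact QuotientGroup.eq.1 (hq ▸ QuotientGroup.out_eq' q)
      simp only [hcond]
      rw [Finset.sum_ite_eq' Finset.univ (QuotientGroup.mk x.1) (fun _ => (1 : ZMod p))]
      simp [hx]
    · simp [hx]
  rwa [heq] at hprod

lemma f_mem [Finite G] [Fintype A] (hp : p ≠ 0)
    (hgen : Subgroup.closure (Set.range φ) = ⊤) (f : A → ZMod p) :
    SemidirectProduct.inl (φ := cayHom G A (ZMod p))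
      (ofAdd fun x : G × A => f x.2) ∈ gaschutzH G A p φ := by
  haveI : NeZero p := ⟨hp⟩
  have key : (∏ a : A, (ofAdd fun x : G × A =>
      if x.2 = a then (1 : ZMod p) else 0) ^ (f a).val)
      = ofAdd (fun x : G × A => f x.2) := by
    apply toAdd.injective
    funext x
    rw [toAdd_prod, Finset.sum_apply]
    have hterm : ∀ a : A, toAdd ((ofAdd fun x : G × A =>
        if x.2 = a then (1 : ZMod p) else 0) ^ (f a).val) x
        = if x.2 = a then ((f a).val : ZMod p) else 0 := by
      intro a
      rw [← ofAdd_nsmul, toAdd_ofAdd, Pi.smul_apply]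
      by_cases hx : x.2 = a <;> simp [hx]
    simp only [hterm, toAdd_ofAdd]
    rw [Finset.sum_ite_eq Finset.univ x.2 (fun a => ((f a).val : ZMod p))]
    simp [ZMod.natCast_rightInverse (f x.2)]
  rw [← key]
  exact inl_prod_mem Finset.univ _ (fun a _ => by
    rw [map_pow]
    exact Subgroup.pow_mem _ (u_mem hgen a) _)

lemma const_central (f : A → ZMod p)
    (w : Multiplicative ((G × A) → ZMod p) ⋊[cayHom G A (ZMod p)] G) :
    w * SemidirectProduct.inl (ofAdd fun x : G × A => f x.2)
      = SemidirectProduct.inl (ofAdd fun x : G × A => f x.2) * w := by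
  have hinv : cayHom G A (ZMod p) w.right (ofAdd fun x : G × A => f x.2)
      = ofAdd fun x : G × A => f x.2 := rfl
  ext
  · simp [hinv, mul_comm]
  · simp

lemma const_mem_center [Finite G] [Fintype A] (hp : p ≠ 0)
    (hgen : Subgroup.closure (Set.range φ) = ⊤) (f : A → ZMod p) :
    (⟨SemidirectProduct.inl (ofAdd fun x : G × A => f x.2), f_mem hp hgen f⟩ :
      gaschutzH G A p φ) ∈ Subgroup.center (gaschutzH G A p φ) :=
  Subgroup.mem_center_iff.2 fun w => Subtype.ext (const_central f w.1)

lemma center_char [Finite G] [Fintype A] (hp : p.Prime) (hA : 2 ≤ Fintype.card A)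
    (hgen : Subgroup.closure (Set.range φ) = ⊤)
    (zm : Multiplicative ((G × A) → ZMod p)) (zg : G)
    (hcomm : ∀ w ∈ gaschutzH G A p φ,
      w * (⟨zm, zg⟩ : Multiplicative ((G × A) → ZMod p) ⋊[cayHom G A (ZMod p)] G)
        = (⟨zm, zg⟩ : Multiplicative ((G × A) → ZMod p) ⋊[cayHom G A (ZMod p)] G) * w) :
    zg = 1 ∧ zm = ofAdd (fun x : G × A => toAdd zm (1, x.2)) := by
  haveI : Fact p.Prime := ⟨hp⟩
  -- basic commutation equation with the generators
  have hE : ∀ (a : A) (y : G) (b : A), toAdd zm ((φ a)⁻¹ * y, b)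
      = toAdd zm (y, b) + (if (zg⁻¹ * y, b) = ((1:G), a) then (1 : ZMod p) else 0)
        - (if ((y : G), b) = ((1:G), a) then 1 else 0) := by
    intro a y b
    have h := hcomm _ (gen_mem a)
    have hl := congrArg (fun w : Multiplicative ((G × A) → ZMod p)
        ⋊[cayHom G A (ZMod p)] G => toAdd w.left (y, b)) h
    simp only [SemidirectProduct.mul_left, toAdd_mul, Pi.add_apply] at hl
    rw [cayHom_apply, cayHom_apply] at hl
    rw [cayGen] at hl
    simp only [toAdd_ofAdd] at hl
    linear_combination hl
  -- invariance of other columns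
  have hinv : ∀ (a b : A), b ≠ a → ∀ y : G,
      toAdd zm ((φ a)⁻¹ * y, b) = toAdd zm (y, b) := by
    intro a b hb y
    have h := hE a y b
    rw [if_neg (by simp [Prod.ext_iff, hb]), if_neg (by simp [Prod.ext_iff, hb])] at h
    simpa using h
  have hinvpow : ∀ (a b : A), b ≠ a → ∀ (n : ℕ) (y : G),
      toAdd zm (((φ a) ^ n)⁻¹ * y, b) = toAdd zm (y, b) := by
    intro a b hb n
    induction n with
    | zero => intro y; simp
    | succ n ih =>
      intro y
      rw [pow_succ', mul_inv_rev, mul_assoc, ih, hinv a b hb]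
  -- `zg` is a power of each generator
  have hg : ∀ a : A, ∃ n : ℕ, (φ a) ^ n = zg := by
    intro a
    have h := hcomm _ (m_mem (p := p) (φ := φ) a)
    have hl := congrArg (fun w : Multiplicative ((G × A) → ZMod p)
        ⋊[cayHom G A (ZMod p)] G => toAdd w.left (zg, a)) h
    simp only [SemidirectProduct.mul_left, SemidirectProduct.left_inl,
      SemidirectProduct.right_inl, map_one, MulAut.one_apply, toAdd_mul, Pi.add_apply] at hl
    rw [cayHom_apply] at hl
    simp only [toAdd_ofAdd] at hl
    have hzz : zg ∈ Subgroup.zpowers (φ a) := by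
      by_contra hcon
      simp [hcon] at hl
    have := (isOfFinOrder_of_finite (φ a)).mem_powers_iff_mem_zpowers.2 hzz
    obtain ⟨n, hn⟩ := this
    exact ⟨n, hn⟩
  -- two distinct letters
  obtain ⟨a, b, hab⟩ := Fintype.exists_pair_of_one_lt_card (by omega : 1 < Fintype.card A)
  -- zg = 1
  have hzg1 : zg = 1 := by
    obtain ⟨na, hna⟩ := hg a
    have hgyinv : ∀ y : G, toAdd zm (zg⁻¹ * y, b) = toAdd zm (y, b) := by
      intro y
      rw [← hna]
      exact hinvpow a b hab.symm na y
    have hEb : ∀ y : G, toAdd zm ((φ b)⁻¹ * y, b)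
        = toAdd zm (y, b) + (if y = zg then (1:ZMod p) else 0)
          - (if y = 1 then 1 else 0) := by
      intro y
      have h := hE b y b
      have c1 : ((zg⁻¹ * y, b) = ((1:G), b)) ↔ (y = zg) := by
        constructor
        · intro hh
          have := (Prod.ext_iff.1 hh).1
          exact (inv_mul_eq_one.1 this).symm
        · intro hh
          subst hh
          simp
      have c2 : (((y:G), b) = ((1:G), b)) ↔ (y = 1) := by
        constructor
        · intro hh; exact (Prod.ext_iff.1 hh).1
        · intro hh; subst hh; rfl
      rw [if_congr c1 rfl rfl, if_congr c2 rfl rfl] at h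
      exact h
    have htel : ∀ (j : ℕ) (y : G), toAdd zm (((φ b) ^ j)⁻¹ * y, b)
        = toAdd zm (y, b) + ∑ i ∈ Finset.range j,
            ((if y = (φ b) ^ i * zg then (1:ZMod p) else 0)
              - (if y = (φ b) ^ i then 1 else 0)) := by
      intro j
      induction j with
      | zero => intro y; simp
      | succ j ih =>
        intro y
        rw [pow_succ', mul_inv_rev, mul_assoc, ih, hEb]
        have hstep : ∀ i : ℕ, ((if (φ b)⁻¹ * y = (φ b) ^ i * zg then (1:ZMod p) else 0)
            - (if (φ b)⁻¹ * y = (φ b) ^ i then 1 else 0))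
            = ((if y = (φ b) ^ (i+1) * zg then (1:ZMod p) else 0)
              - (if y = (φ b) ^ (i+1) then 1 else 0)) := by
          intro i
          have i1 : ((φ b)⁻¹ * y = (φ b) ^ i * zg) ↔ (y = (φ b)^(i+1) * zg) := by
            rw [inv_mul_eq_iff_eq_mul, pow_succ' (φ b) i, mul_assoc]
          have i2 : ((φ b)⁻¹ * y = (φ b) ^ i) ↔ (y = (φ b)^(i+1)) := by
            rw [inv_mul_eq_iff_eq_mul, pow_succ' (φ b) i]
          rw [if_congr i1 rfl rfl, if_congr i2 rfl rfl]
        rw [Finset.sum_congr rfl (fun i _ => hstep i), Finset.sum_range_succ']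
        simp only [pow_zero, one_mul]
        ring
    have hex := hg b
    by_contra hzgne
    have hcspec : (φ b) ^ (Nat.find hex) = zg := Nat.find_spec hex
    set c := Nat.find hex with hc
    have hcne : c ≠ 0 := by
      intro h0
      rw [h0, pow_zero] at hcspec
      exact hzgne hcspec.symm
    have h0 := htel c zg
    rw [hcspec, hgyinv] at h0
    have hsum : (∑ i ∈ Finset.range c, ((if zg = (φ b)^i * zg then (1:ZMod p) else 0)
        - (if zg = (φ b)^i then 1 else 0))) = 0 := by
      linear_combination - h0
    rw [Finset.sum_sub_distrib] at hsum
    have h1 : (∑ i ∈ Finset.range c, if zg = (φ b)^i * zg then (1:ZMod p) else 0) = 1 := by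
      rw [Finset.sum_eq_single 0]
      · simp
      · intro i hi hine
        have hilt := Finset.mem_range.1 hi
        rw [if_neg]
        intro heq
        have hti : (φ b)^i = 1 := mul_eq_right.1 heq.symm
        have hzi : (φ b) ^ (c - i) = zg := by
          calc (φ b)^(c-i) = (φ b)^(c-i) * (φ b)^i := by rw [hti, mul_one]
          _ = (φ b)^c := by rw [← pow_add, Nat.sub_add_cancel (le_of_lt hilt)]
          _ = zg := hcspec
        exact absurd hzi (Nat.find_min hex (by omega : c - i < c))
      · intro h
        exact absurd (Finset.mem_range.2 (Nat.pos_of_ne_zero hcne)) h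
    have h2 : (∑ i ∈ Finset.range c, if zg = (φ b)^i then (1:ZMod p) else 0) = 0 := by
      apply Finset.sum_eq_zero
      intro i hi
      rw [if_neg]
      intro heq
      exact absurd heq.symm (Nat.find_min hex (Finset.mem_range.1 hi))
    rw [h1, h2] at hsum
    simp at hsum
  refine ⟨hzg1, ?_⟩
  have hall : ∀ (a : A) (y : G) (b : A), toAdd zm ((φ a)⁻¹ * y, b) = toAdd zm (y, b) := by
    intro a y b
    have h := hE a y b
    rw [hzg1] at h
    simpa using h
  let S : Subgroup G :=
    { carrier := {x : G | ∀ (y : G) (b : A), toAdd zm (x⁻¹ * y, b) = toAdd zm (y, b)}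
      one_mem' := by intro y b; simp
      mul_mem' := by
        intro x x' hx hx' y b
        rw [mul_inv_rev, mul_assoc, hx', hx]
      inv_mem' := by
        intro x hx y b
        have h := hx (x * y) b
        rw [inv_mul_cancel_left] at h
        rw [inv_inv]
        exact h.symm }
  have hS : ∀ x : G, x ∈ S := by
    intro x
    have hle : Subgroup.closure (Set.range φ) ≤ S :=
      (Subgroup.closure_le S).2 (by rintro _ ⟨a, rfl⟩; exact fun y b => hall a y b)
    rw [hgen] at hle
    exact hle trivial
  apply toAdd.injective
  funext x
  simp only [toAdd_ofAdd]
  have h := hS x.1 x.1 x.2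
  rw [inv_mul_cancel] at h
  exact h.symm

def centerHom [Finite G] [Fintype A] (hp : p ≠ 0)
    (hgen : Subgroup.closure (Set.range φ) = ⊤) :
    Multiplicative (A → ZMod p) →* Subgroup.center (gaschutzH G A p φ) where
  toFun f := ⟨⟨SemidirectProduct.inl (ofAdd fun x : G × A => toAdd f x.2),
      f_mem hp hgen _⟩, const_mem_center hp hgen _⟩
  map_one' := rfl
  map_mul' f f' := by
    apply Subtype.ext
    apply Subtype.ext
    show SemidirectProduct.inl _ = (SemidirectProduct.inl _) * (SemidirectProduct.inl _)
    rw [← map_mul]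
    rfl

end GzAux

/-- The map `f ↦ (α_f, 1)` (where `α_f(g,a) = f a`) is a group
isomorphism from the additive group of functions `A → ℤ/pℤ` onto the center of
`H = G^{ℤ/p}`; in particular the center has order `p^|A|`. -/
theorem center_of_gaschutz_is_elementary_abelian
    {G A : Type*} [Group G] [Fintype G] [Fintype A] [DecidableEq G] [DecidableEq A]
    (hA : 2 ≤ Fintype.card A)
    (p : ℕ) (hp : p.Prime)
    (φ : A → G) (hgen : Subgroup.closure (Set.range φ) = ⊤) :
    (∃ e : Multiplicative (A → ZMod p) ≃* Subgroup.center (gaschutzH G A p φ),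
      ∀ f : A → ZMod p,
        ((e (ofAdd f) : gaschutzH G A p φ) :
            Multiplicative ((G × A) → ZMod p) ⋊[cayHom G A (ZMod p)] G) =
          ⟨ofAdd (fun x : G × A => f x.2), (1 : G)⟩) ∧
    Nat.card (Subgroup.center (gaschutzH G A p φ)) = p ^ Fintype.card A := by
  have hp0 : p ≠ 0 := hp.ne_zero
  haveI : NeZero p := ⟨hp0⟩
  have hinj : Function.Injective (GzAux.centerHom (p := p) (φ := φ) hp0 hgen) := by
    intro f f' h
    have h2 := congrArg (fun z : Subgroup.center (gaschutzH G A p φ) =>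
      toAdd (((z : gaschutzH G A p φ) :
        Multiplicative ((G × A) → ZMod p) ⋊[cayHom G A (ZMod p)] G).left)) h
    apply toAdd.injective
    funext a
    exact congrFun h2 ((1 : G), a)
  have hsurj : Function.Surjective (GzAux.centerHom (p := p) (φ := φ) hp0 hgen) := by
    rintro ⟨⟨z, hzH⟩, hzc⟩
    have hcomm : ∀ w ∈ gaschutzH G A p φ, w * z = z * w := by
      intro w hw
      have := (Subgroup.mem_center_iff.1 hzc) ⟨w, hw⟩
      exact congrArg Subtype.val this
    obtain ⟨hzg, hzm⟩ := GzAux.center_char hp hA hgen z.left z.right hcomm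
    refine ⟨ofAdd (fun b => toAdd z.left ((1 : G), b)), ?_⟩
    apply Subtype.ext
    apply Subtype.ext
    show SemidirectProduct.inl _ = z
    have hz : z = ⟨z.left, z.right⟩ := rfl
    rw [hz]
    apply SemidirectProduct.ext
    · exact hzm.symm
    · exact hzg.symm
  set e := MulEquiv.ofBijective _ ⟨hinj, hsurj⟩ with he
  refine ⟨⟨e, fun f => rfl⟩, ?_⟩
  have hcard := Nat.card_congr e.toEquiv
  rw [← hcard, Nat.card_congr (Multiplicative.toAdd (α := A → ZMod p)),
    Nat.card_eq_fintype_card, Fintype.card_fun, ZMod.card]
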